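/- Let w^R(τ,y) be the unique smooth solution of the Burgers equation w_τ+w w_y=0 with initial data w₀(y)=(w_++w_-)/2+((w_+−w_-)/2)tanh y, where w_-<w_+. Then: if y−w_-τ<0, one has |w^R(τ,y)−w_-| ≤ (w_+−w_-)e^{−2|y−w_-τ|} and |∂_y w^R(τ,y)| ≤ 2(w_+−w_-)e^{−2|y−w_-τ|}; and if y−w_+τ>0, one has |w^R(τ,y)−w_+| ≤ (w_+−w_-)e^{−2|y−w_+τ|} and |∂_y w^R(τ,y)| ≤ 2(w_+−w_-)e^{−2|y−w_+τ|}. -/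

import Mathlib

open MeasureTheory Filter Set
open scoped ENNReal

noncomputable section

/-- Partial derivative in the first (time) variable. -/
def dT (f : ℝ → ℝ → ℝ) (τ y : ℝ) : ℝ := deriv (fun s => f s y) τ

/-- Partial derivative in the second (space) variable. -/
def dY (f : ℝ → ℝ → ℝ) (τ y : ℝ) : ℝ := deriv (fun z => f τ z) y

/-- Second space derivative. -/
def dYY (f : ℝ → ℝ → ℝ) (τ y : ℝ) : ℝ := deriv (fun z => dY f τ z) y

/-- Mixed derivative: space derivative of the time derivative. -/
def dYT (f : ℝ → ℝ → ℝ) (τ y : ℝ) : ℝ := deriv (fun z => dT f τ z) y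

/-- Smoothed (tanh) initial data for the Burgers equation. -/
def w0 (wm wp y : ℝ) : ℝ := (wp + wm) / 2 + (wp - wm) / 2 * Real.tanh y

/-- `w` is the smooth solution of Burgers' equation `w_τ + w w_y = 0` with tanh-smoothed
Riemann data, characterized through the method of characteristics:
`w(τ,y) = w₀(x₀)` where `y = x₀ + w₀(x₀) τ`. -/
def IsSmoothedBurgers (wm wp : ℝ) (w : ℝ → ℝ → ℝ) : Prop :=
  ∀ τ ≥ (0:ℝ), ∀ y : ℝ, ∃ x0 : ℝ, y = x0 + w0 wm wp x0 * τ ∧ w τ y = w0 wm wp x0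

namespace BurgersAux

open Real

lemma tanh_exp (x : ℝ) : Real.tanh x = (exp x - exp (-x)) / (exp x + exp (-x)) := by
  have hb : exp x + exp (-x) ≠ 0 := by positivity
  rw [Real.tanh_eq_sinh_div_cosh, Real.sinh_eq, Real.cosh_eq]
  field_simp

lemma one_add_tanh_eq (x : ℝ) : 1 + Real.tanh x = 2 * exp x / (exp x + exp (-x)) := by
  have hb : exp x + exp (-x) ≠ 0 := by positivity
  rw [tanh_exp]; field_simp; ring

lemma one_add_tanh_nonneg (x : ℝ) : 0 ≤ 1 + Real.tanh x := by
  rw [one_add_tanh_eq]; positivity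

lemma one_add_tanh_le (x : ℝ) : 1 + Real.tanh x ≤ 2 * exp (2 * x) := by
  rw [one_add_tanh_eq]
  have h1 : 2 * exp x / (exp x + exp (-x)) ≤ 2 * exp x / exp (-x) := by
    apply div_le_div_of_nonneg_left (by positivity) (by positivity)
    nlinarith [exp_pos x]
  calc 2 * exp x / (exp x + exp (-x)) ≤ 2 * exp x / exp (-x) := h1
    _ = 2 * exp (2 * x) := by
        rw [mul_div_assoc, ← Real.exp_sub]; ring_nf

lemma one_sub_tanh_nonneg (x : ℝ) : 0 ≤ 1 - Real.tanh x := by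
  have := one_add_tanh_nonneg (-x); rw [Real.tanh_neg] at this; linarith

lemma one_sub_tanh_le (x : ℝ) : 1 - Real.tanh x ≤ 2 * exp (-(2 * x)) := by
  have := one_add_tanh_le (-x); rw [Real.tanh_neg] at this
  calc 1 - Real.tanh x = 1 + -Real.tanh x := by ring
    _ ≤ 2 * exp (2 * -x) := this
    _ = 2 * exp (-(2*x)) := by ring_nf

lemma hasDerivAt_tanh (x : ℝ) : HasDerivAt Real.tanh (1 / Real.cosh x ^ 2) x := by
  have hc : Real.cosh x ≠ 0 := (Real.cosh_pos x).ne'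
  have h := (Real.hasDerivAt_sinh x).div (Real.hasDerivAt_cosh x) hc
  have heq : (fun y => Real.sinh y / Real.cosh y) = Real.tanh := by
    funext y; rw [Real.tanh_eq_sinh_div_cosh]
  rw [show Real.sinh / Real.cosh = Real.tanh from heq] at h
  refine h.congr_deriv ?_
  have h2 := Real.cosh_sq_sub_sinh_sq x
  rw [div_left_inj' (pow_ne_zero 2 hc)]
  nlinarith [h2]

lemma le_cosh (x : ℝ) : exp |x| / 2 ≤ Real.cosh x := by
  rw [Real.cosh_eq]
  rcases abs_cases x with ⟨h, _⟩ | ⟨h, _⟩ <;> rw [h] <;>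
    nlinarith [Real.exp_pos x, Real.exp_pos (-x)]

lemma inv_cosh_sq_le (x : ℝ) : 1 / Real.cosh x ^ 2 ≤ 4 * exp (-(2 * |x|)) := by
  have h1 : (exp |x| / 2)^2 ≤ Real.cosh x ^ 2 :=
    pow_le_pow_left₀ (by positivity) (le_cosh x) 2
  have h2 : 1 / Real.cosh x ^ 2 ≤ 1 / (exp |x| / 2)^2 :=
    one_div_le_one_div_of_le (by positivity) h1
  have e2 : Real.exp (2 * |x|) = exp |x| * exp |x| := by rw [two_mul, Real.exp_add]
  have h3 : 1 / (exp |x| / 2)^2 = 4 * exp (-(2 * |x|)) := by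
    rw [Real.exp_neg, e2]
    have := Real.exp_pos |x|
    field_simp; ring
  linarith

/-- the space derivative of the initial data. -/
def w0d (wm wp x : ℝ) : ℝ := (wp - wm) / 2 * (1 / Real.cosh x ^ 2)

lemma hasDerivAt_w0 (wm wp x : ℝ) : HasDerivAt (w0 wm wp) (w0d wm wp x) x := by
  have := ((hasDerivAt_tanh x).const_mul ((wp - wm)/2)).const_add ((wp + wm)/2)
  exact this

lemma w0d_nonneg {wm wp : ℝ} (h : wm ≤ wp) (x : ℝ) : 0 ≤ w0d wm wp x := by
  have hc := Real.cosh_pos x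
  unfold w0d
  apply mul_nonneg (by linarith) (by positivity)

lemma w0d_le {wm wp : ℝ} (h : wm ≤ wp) (x : ℝ) :
    w0d wm wp x ≤ 2 * (wp - wm) * exp (-(2 * |x|)) := by
  have h1 := inv_cosh_sq_le x
  have h2 : (0:ℝ) ≤ (wp - wm) / 2 := by linarith
  calc w0d wm wp x ≤ (wp - wm) / 2 * (4 * exp (-(2 * |x|))) :=
        mul_le_mul_of_nonneg_left h1 h2
    _ = 2 * (wp - wm) * exp (-(2 * |x|)) := by ring

lemma w0_mono {wm wp : ℝ} (h : wm ≤ wp) : Monotone (w0 wm wp) := by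
  apply monotone_of_deriv_nonneg
  · exact fun x => (hasDerivAt_w0 wm wp x).differentiableAt
  · intro x
    rw [(hasDerivAt_w0 wm wp x).deriv]
    exact w0d_nonneg h x

lemma w0_sub_wm {wm wp : ℝ} (x : ℝ) :
    w0 wm wp x - wm = (wp - wm) / 2 * (1 + Real.tanh x) := by
  unfold w0; ring

lemma wp_sub_w0 {wm wp : ℝ} (x : ℝ) :
    wp - w0 wm wp x = (wp - wm) / 2 * (1 - Real.tanh x) := by
  unfold w0; ring

lemma w0_ge {wm wp : ℝ} (h : wm ≤ wp) (x : ℝ) : wm ≤ w0 wm wp x := by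
  nlinarith [one_add_tanh_nonneg x, w0_sub_wm (wm := wm) (wp := wp) x]

lemma w0_le {wm wp : ℝ} (h : wm ≤ wp) (x : ℝ) : w0 wm wp x ≤ wp := by
  nlinarith [one_sub_tanh_nonneg x, wp_sub_w0 (wm := wm) (wp := wp) x]

end BurgersAux

open BurgersAux Real

/-- Exponential decay of the smoothed Burgers solution towards its far-field values
outside the fan region. -/
theorem burgers_exponential_decay (wm wp : ℝ) (h : wm < wp) (w : ℝ → ℝ → ℝ)
    (hw : IsSmoothedBurgers wm wp w) :
    ∀ τ ≥ (0:ℝ), ∀ y : ℝ,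
      (y - wm * τ < 0 →
        |w τ y - wm| ≤ (wp - wm) * Real.exp (-(2 * |y - wm * τ|)) ∧
        |dY w τ y| ≤ 2 * (wp - wm) * Real.exp (-(2 * |y - wm * τ|))) ∧
      (0 < y - wp * τ →
        |w τ y - wp| ≤ (wp - wm) * Real.exp (-(2 * |y - wp * τ|)) ∧
        |dY w τ y| ≤ 2 * (wp - wm) * Real.exp (-(2 * |y - wp * τ|))) := by
  intro τ hτ y
  have hle : wm ≤ wp := h.le
  set g : ℝ → ℝ := fun x => x + w0 wm wp x * τ with hg_def
  -- derivative of g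
  have hgderiv : ∀ x, HasDerivAt g (1 + w0d wm wp x * τ) x := fun x =>
    (hasDerivAt_id x).add ((hasDerivAt_w0 wm wp x).mul_const τ)
  -- strict monotonicity
  have hmono : StrictMono g :=
    strictMono_id.add_monotone ((w0_mono hle).mul_const hτ)
  -- continuity
  have hcont : Continuous g := by
    have : Differentiable ℝ g := fun x => (hgderiv x).differentiableAt
    exact this.continuous
  -- tendsto atTop / atBot
  have htop : Tendsto g atTop atTop := by
    apply tendsto_atTop_mono (fun x => ?_) (tendsto_atTop_add_const_right _ (wm * τ) tendsto_id)
    have := w0_ge hle x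
    have : wm * τ ≤ w0 wm wp x * τ := mul_le_mul_of_nonneg_right this hτ
    simp only [hg_def, id]
    linarith
  have hbot : Tendsto g atBot atBot := by
    apply tendsto_atBot_mono (fun x => ?_) (tendsto_atBot_add_const_right _ (wp * τ) tendsto_id)
    have := w0_le hle x
    have : w0 wm wp x * τ ≤ wp * τ := mul_le_mul_of_nonneg_right this hτ
    simp only [hg_def, id]
    linarith
  have hsurj : Function.Surjective g := hcont.surjective htop hbot
  set e := StrictMono.orderIsoOfSurjective g hmono hsurj with he_def
  have hge : ∀ z, g (e.symm z) = z := fun z =>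
    StrictMono.orderIsoOfSurjective_self_symm_apply g hmono hsurj z
  -- w τ equals w0 ∘ e.symm
  have hwkey : ∀ z, w τ z = w0 wm wp (e.symm z) := by
    intro z
    obtain ⟨x0, hx0, hval⟩ := hw τ hτ z
    have hgx : g x0 = z := hx0.symm
    have : e.symm z = x0 := by
      rw [← hgx]
      exact StrictMono.orderIsoOfSurjective_symm_apply_self g hmono hsurj x0
    rw [hval, this]
  set x0 := e.symm y with hx0_def
  have hgx0 : x0 + w0 wm wp x0 * τ = y := hge y
  set D := 1 + w0d wm wp x0 * τ with hD_def
  have hD1 : 1 ≤ D := by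
    have := mul_nonneg (w0d_nonneg hle x0) hτ
    simp only [hD_def]; linarith
  have hDpos : 0 < D := by linarith
  -- derivative of the inverse
  have hinv : HasDerivAt (⇑e.symm) D⁻¹ y := by
    apply HasDerivAt.of_local_left_inverse (e.symm.continuous.continuousAt)
      (hgderiv x0) hDpos.ne'
    exact Filter.Eventually.of_forall hge
  -- derivative of w τ ·
  have hcomp : HasDerivAt (fun z => w0 wm wp (e.symm z)) (w0d wm wp x0 * D⁻¹) y :=
    ((hasDerivAt_w0 wm wp x0).comp y hinv :)
  have hdY : dY w τ y = w0d wm wp x0 * D⁻¹ := by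
    have hfun : (fun z => w τ z) = fun z => w0 wm wp (e.symm z) := funext hwkey
    rw [dY, hfun, hcomp.deriv]
  -- bound on the derivative in terms of x0
  have hdY_le : |dY w τ y| ≤ 2 * (wp - wm) * exp (-(2 * |x0|)) := by
    rw [hdY, abs_of_nonneg (mul_nonneg (w0d_nonneg hle x0) (by positivity))]
    calc w0d wm wp x0 * D⁻¹ ≤ w0d wm wp x0 * 1 := by
          apply mul_le_mul_of_nonneg_left _ (w0d_nonneg hle x0)
          rw [inv_le_one_iff₀]; right; exact hD1
      _ = w0d wm wp x0 := mul_one _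
      _ ≤ 2 * (wp - wm) * exp (-(2 * |x0|)) := w0d_le hle x0
  constructor
  · -- left case
    intro hy
    have hx0le : x0 ≤ y - wm * τ := by
      have h1 : wm ≤ w0 wm wp x0 := w0_ge hle x0
      nlinarith
    have hx0neg : x0 < 0 := lt_of_le_of_lt hx0le hy
    have habs : |y - wm * τ| ≤ |x0| := by
      rw [abs_of_neg hy, abs_of_neg hx0neg]; linarith
    have hexp : exp (-(2 * |x0|)) ≤ exp (-(2 * |y - wm * τ|)) :=
      Real.exp_le_exp.mpr (by linarith)
    constructor
    · rw [hwkey y, abs_of_nonneg (by linarith [w0_ge hle x0])]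
      have h1 : w0 wm wp x0 - wm ≤ (wp - wm) * exp (2 * x0) := by
        rw [w0_sub_wm]
        nlinarith [one_add_tanh_le x0, exp_pos (2 * x0), one_add_tanh_nonneg x0]
      have h2 : (2 : ℝ) * x0 = -(2 * |x0|) := by
        rw [abs_of_neg hx0neg]; ring
      rw [h2] at h1
      calc w0 wm wp x0 - wm ≤ (wp - wm) * exp (-(2 * |x0|)) := h1
        _ ≤ (wp - wm) * exp (-(2 * |y - wm * τ|)) := by
            apply mul_le_mul_of_nonneg_left hexp (by linarith)
    · calc |dY w τ y| ≤ 2 * (wp - wm) * exp (-(2 * |x0|)) := hdY_le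
        _ ≤ 2 * (wp - wm) * exp (-(2 * |y - wm * τ|)) := by
            apply mul_le_mul_of_nonneg_left hexp (by linarith)
  · -- right case
    intro hy
    have hx0ge : y - wp * τ ≤ x0 := by
      have h1 : w0 wm wp x0 ≤ wp := w0_le hle x0
      nlinarith
    have hx0pos : 0 < x0 := lt_of_lt_of_le hy hx0ge
    have habs : |y - wp * τ| ≤ |x0| := by
      rw [abs_of_pos hy, abs_of_pos hx0pos]; linarith
    have hexp : exp (-(2 * |x0|)) ≤ exp (-(2 * |y - wp * τ|)) :=
      Real.exp_le_exp.mpr (by linarith)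
    constructor
    · rw [hwkey y, abs_sub_comm, abs_of_nonneg (by linarith [w0_le hle x0])]
      have h1 : wp - w0 wm wp x0 ≤ (wp - wm) * exp (-(2 * x0)) := by
        rw [wp_sub_w0]
        nlinarith [one_sub_tanh_le x0, exp_pos (-(2 * x0)), one_sub_tanh_nonneg x0]
      have h2 : -((2 : ℝ) * x0) = -(2 * |x0|) := by
        rw [abs_of_pos hx0pos]
      rw [h2] at h1
      calc wp - w0 wm wp x0 ≤ (wp - wm) * exp (-(2 * |x0|)) := h1
        _ ≤ (wp - wm) * exp (-(2 * |y - wp * τ|)) := by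
            apply mul_le_mul_of_nonneg_left hexp (by linarith)
    · calc |dY w τ y| ≤ 2 * (wp - wm) * exp (-(2 * |x0|)) := hdY_le
        _ ≤ 2 * (wp - wm) * exp (-(2 * |y - wp * τ|)) := by
            apply mul_le_mul_of_nonneg_left hexp (by linarith)
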